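/- Let X_n, Y_n be the interval endpoints of the arithmetic coder after n i.i.d. Bernoulli(p) bits. Then the expected interval length satisfies E[Y_n − X_n] = (1 − 2pq)ⁿ = (2p² − 2p + 1)ⁿ for all n ≥ 0. -/

import Mathlib

open MeasureTheory ProbabilityTheory

/-- The expected interval length after `n` i.i.d. Bernoulli(p) bits is
`(1-2pq)ⁿ = (2p²-2p+1)ⁿ`. -/
theorem expected_interval_length
    (p : ℝ) (hp : p ∈ Set.Ioo (0:ℝ) 1) (q : ℝ) (hq : q = 1 - p)
    {Ω : Type*} [MeasurableSpace Ω] (μ : Measure Ω) [IsProbabilityMeasure μ]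
    (B : ℕ → Ω → Bool) (hBmeas : ∀ n, Measurable (B n))
    (hBindep : iIndepFun B μ)
    (hBdist : ∀ n, μ {ω | B n ω = true} = ENNReal.ofReal p)
    (X Y : ℕ → Ω → ℝ)
    (hX0 : ∀ ω, X 0 ω = 0) (hY0 : ∀ ω, Y 0 ω = 1)
    (hstep : ∀ n ω, (X (n + 1) ω, Y (n + 1) ω) =
      if B n ω then (X n ω + q * (Y n ω - X n ω), Y n ω)
      else (X n ω, X n ω + q * (Y n ω - X n ω))) :
    ∀ n, (∫ ω, (Y n ω - X n ω) ∂μ) = (1 - 2 * p * q) ^ n ∧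
      (1 - 2 * p * q) ^ n = (2 * p ^ 2 - 2 * p + 1) ^ n := by
  obtain ⟨hp0, hp1⟩ := hp
  have hq0 : 0 < q := by rw [hq]; linarith
  -- the multiplicative factor per bit
  set φ : Bool → ℝ := fun b => if b then p else q with hφdef
  have hφmeas : Measurable φ := measurable_from_top
  set g : ℕ → Ω → ℝ := fun k ω => φ (B k ω) with hgdef
  have hgmeas : ∀ k, Measurable (g k) := fun k => hφmeas.comp (hBmeas k)
  have hgnonneg : ∀ k ω, 0 ≤ g k ω := by
    intro k ω
    simp only [hgdef, hφdef]
    split <;> positivity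
  have hgindep : iIndepFun g μ :=
    hBindep.comp (fun _ => φ) (fun _ => hφmeas)
  -- interval length as a product
  have hlen : ∀ n ω, Y n ω - X n ω = ∏ k ∈ Finset.range n, g k ω := by
    intro n
    induction n with
    | zero => intro ω; simp [hX0, hY0]
    | succ n ih =>
      intro ω
      have h := hstep n ω
      rw [Finset.prod_range_succ, ← ih ω]
      by_cases hb : B n ω = true
      · rw [hb] at h
        simp only [if_true] at h
        have hx := congrArg Prod.fst h
        have hy := congrArg Prod.snd h
        simp only at hx hy
        simp only [hgdef, hφdef, hb, if_true]
        rw [hx, hy, hq]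
        ring
      · rw [Bool.not_eq_true] at hb
        rw [hb] at h
        simp only [Bool.false_eq_true, if_false] at h
        have hx := congrArg Prod.fst h
        have hy := congrArg Prod.snd h
        simp only at hx hy
        simp only [hgdef, hφdef, hb, Bool.false_eq_true, if_false]
        rw [hx, hy]
        ring
  -- expectation of one factor
  have hsmeas : ∀ k, MeasurableSet {ω | B k ω = true} := by
    intro k
    exact (hBmeas k) (measurableSet_singleton true)
  have hgint : ∀ k, (∫ ω, g k ω ∂μ) = 1 - 2 * p * q := by
    intro k
    have hrepr : ∀ ω, g k ω =
        q + (p - q) * Set.indicator {ω | B k ω = true} (fun _ => (1:ℝ)) ω := by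
      intro ω
      by_cases hb : B k ω = true
      · simp [hgdef, hφdef, hb, Set.indicator_of_mem, Set.mem_setOf_eq]
      · rw [Bool.not_eq_true] at hb
        simp [hgdef, hφdef, hb, Set.indicator_of_notMem, Set.mem_setOf_eq]
    have hindint : Integrable (Set.indicator {ω | B k ω = true} (fun _ => (1:ℝ))) μ := by
      apply IntegrableOn.integrable_indicator _ (hsmeas k)
      exact integrableOn_const (measure_ne_top μ _)
    calc (∫ ω, g k ω ∂μ)
        = ∫ ω, (q + (p - q) * Set.indicator {ω | B k ω = true} (fun _ => (1:ℝ)) ω) ∂μ := by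
          exact integral_congr_ae (Filter.Eventually.of_forall hrepr)
      _ = q + (p - q) * p := by
          rw [integral_add (integrable_const q) (hindint.const_mul _),
            integral_const, integral_const_mul, integral_indicator_const _ (hsmeas k)]
          simp [measureReal_def, hBdist k, ENNReal.toReal_ofReal hp0.le]
      _ = 1 - 2 * p * q := by rw [hq]; ring
  -- integrability of the partial products
  have hprodint : ∀ n, Integrable (∏ k ∈ Finset.range n, g k) μ := by
    intro n
    have hbdd : ∀ ω, ‖(∏ k ∈ Finset.range n, g k) ω‖ ≤ 1 := by
      intro ω
      simp only [Finset.prod_apply]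
      rw [Real.norm_eq_abs, abs_of_nonneg (Finset.prod_nonneg fun k _ => hgnonneg k ω)]
      apply Finset.prod_le_one (fun k _ => hgnonneg k ω)
      intro k _
      simp only [hgdef, hφdef]
      split
      · exact hp1.le
      · rw [hq]; linarith
    have hm : Measurable (∏ k ∈ Finset.range n, g k) := by
      rw [show (∏ k ∈ Finset.range n, g k) = fun ω => ∏ k ∈ Finset.range n, g k ω from
        funext fun ω => Finset.prod_apply ω _ _]
      exact Finset.measurable_prod _ (fun k _ => hgmeas k)
    exact (integrable_const (1:ℝ)).mono' hm.aestronglyMeasurable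
      (Filter.Eventually.of_forall hbdd)
  -- main induction
  have hmain : ∀ n, (∫ ω, (∏ k ∈ Finset.range n, g k) ω ∂μ) = (1 - 2 * p * q) ^ n := by
    intro n
    induction n with
    | zero => simp
    | succ n ih =>
      have hIndep : IndepFun (∏ j ∈ Finset.range n, g j) (g n) μ :=
        hgindep.indepFun_prod_range_succ hgmeas n
      have := hIndep.integral_mul_eq_mul_integral
        (by
          rw [show (∏ j ∈ Finset.range n, g j) = fun ω => ∏ k ∈ Finset.range n, g k ω from
            funext fun ω => Finset.prod_apply ω _ _]
          exact (Finset.measurable_prod _ (fun k _ => hgmeas k)).aestronglyMeasurable)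
        ((hgmeas n).aestronglyMeasurable)
      have heq : (∏ k ∈ Finset.range (n+1), g k) = (∏ j ∈ Finset.range n, g j) * g n :=
        Finset.prod_range_succ _ _
      rw [show (∫ ω, (∏ k ∈ Finset.range (n+1), g k) ω ∂μ)
            = ∫ ω, ((∏ j ∈ Finset.range n, g j) * g n) ω ∂μ by rw [heq]]
      rw [show (∫ ω, ((∏ j ∈ Finset.range n, g j) * g n) ω ∂μ)
            = integral μ ((∏ j ∈ Finset.range n, g j) * g n) from rfl, this]
      rw [show integral μ (∏ j ∈ Finset.range n, g j)
            = ∫ ω, (∏ k ∈ Finset.range n, g k) ω ∂μ from rfl, ih, hgint n]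
      ring
  intro n
  constructor
  · calc (∫ ω, (Y n ω - X n ω) ∂μ)
        = ∫ ω, (∏ k ∈ Finset.range n, g k) ω ∂μ := by
          apply integral_congr_ae (Filter.Eventually.of_forall _)
          intro ω
          simpa using hlen n ω
      _ = (1 - 2 * p * q) ^ n := hmain n
  · congr 1
    rw [hq]; ring
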